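/- For the basic Maki-Thompson parameters (θ = λ = p = 1, α = λ, x₁₀ → 1, y₁₀ → 0, x₂₀ → 0 limit reduces to): the equation 2(1-x) + ln(x) = 0 has a unique root x* in (0,1), and x* < 0.204 (approximately 20% of the population remains ignorant). -/

import Mathlib

open Real Set

noncomputable def g : ℝ → ℝ := fun x => 2 * (1 - x) + Real.log x

lemma g_concave : StrictConcaveOn ℝ (Set.Ioi 0) g := by
  have h1 : ConcaveOn ℝ (Set.Ioi (0:ℝ)) (fun x : ℝ => 2 * (1 - x)) := by
    have : ConcaveOn ℝ (Set.Ioi (0:ℝ)) (fun x : ℝ => -x) := (convexOn_id (convex_Ioi 0)).neg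
    have h2 := (this.smul (by norm_num : (0:ℝ) ≤ 2)).add_const 2
    convert h2 using 2 with x
    · rfl
    · rfl
    simp [smul_eq_mul]; ring
  have := h1.add_strictConcaveOn strictConcaveOn_log_Ioi
  exact this

lemma g_pos_mid {a b c : ℝ} (ha : 0 < a) (hab : a < b) (hbc : b < c)
    (hfa : 0 ≤ g a) (hfc : 0 ≤ g c) : 0 < g b := by
  set t := (c - b) / (c - a) with ht
  set s := (b - a) / (c - a) with hs
  have hca : 0 < c - a := by linarith
  have htpos : 0 < t := div_pos (by linarith) hca
  have hspos : 0 < s := div_pos (by linarith) hca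
  have hts : t + s = 1 := by
    rw [ht, hs, ← add_div, show c - b + (b - a) = c - a by ring]
    exact div_self hca.ne'
  have hcomb : t • a + s • c = b := by
    show t * a + s * c = b
    rw [ht, hs]
    field_simp
    ring
  have := g_concave.2 (mem_Ioi.2 ha) (mem_Ioi.2 (lt_trans (lt_trans ha hab) hbc))
    (by linarith : a ≠ c) htpos hspos hts
  rw [hcomb] at this
  have h1 : t * g a + s * g c < g b := this
  nlinarith [mul_nonneg htpos.le hfa, mul_nonneg hspos.le hfc]

lemma exp_bound : (250:ℝ)/51 < Real.exp 1.592 := by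
  have h := Real.sum_le_exp_of_nonneg (by norm_num : (0:ℝ) ≤ 1.592) 10
  have : (250:ℝ)/51 < ∑ i ∈ Finset.range 10, (1.592:ℝ) ^ i / (Nat.factorial i : ℝ) := by
    simp [Finset.sum_range_succ, Nat.factorial]
    norm_num
  linarith

lemma log_bound : -1.592 < Real.log 0.204 := by
  rw [Real.lt_log_iff_exp_lt (by norm_num : (0:ℝ) < 0.204)]
  rw [Real.exp_neg]
  have h0 : (0:ℝ) < 250/51 := by norm_num
  calc (Real.exp 1.592)⁻¹ < ((250:ℝ)/51)⁻¹ :=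
        (inv_lt_inv₀ (Real.exp_pos _) h0).2 exp_bound
    _ = 0.204 := by norm_num

lemma hg204 : 0 < g 0.204 := by
  have := log_bound
  simp only [g]
  nlinarith

lemma hg1 : g 1 = 0 := by simp [g]

lemma exists_root : ∃ x ∈ Set.Ioo (Real.exp (-2)) 0.204, g x = 0 := by
  have ha0 : (0:ℝ) < Real.exp (-2) := Real.exp_pos _
  have ha204 : Real.exp (-2) < 0.204 := by
    have h1 : Real.exp (-2) < Real.exp (-1.592) := by
      apply Real.exp_lt_exp.2; norm_num
    have h2 : Real.exp (-1.592) < 0.204 := by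
      rw [← Real.lt_log_iff_exp_lt (by norm_num : (0:ℝ) < 0.204)]
      exact log_bound
    linarith
  have hga : g (Real.exp (-2)) < 0 := by
    simp only [g, Real.log_exp]
    nlinarith [Real.exp_pos (-2 : ℝ)]
  have hcont : ContinuousOn g (Set.Icc (Real.exp (-2)) 0.204) := by
    apply ContinuousOn.add
    · exact (continuous_const.mul (continuous_const.sub continuous_id)).continuousOn
    · apply Real.continuousOn_log.mono
      intro y hy
      simp only [Set.mem_compl_iff, Set.mem_singleton_iff]
      have := hy.1
      intro h; rw [h] at this; linarith
  have h0 : (0:ℝ) ∈ Set.Ioo (g (Real.exp (-2))) (g 0.204) := ⟨hga, hg204⟩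
  have := intermediate_value_Ioo (le_of_lt ha204) hcont h0
  obtain ⟨x, hx, hgx⟩ := this
  exact ⟨x, hx, hgx⟩

theorem maki_thompson_root
    : (∃! x, x ∈ Set.Ioo (0:ℝ) 1 ∧ 2 * (1 - x) + Real.log x = 0) ∧
      ∀ x ∈ Set.Ioo (0:ℝ) 1, 2 * (1 - x) + Real.log x = 0 → x < 0.204 := by
  obtain ⟨x, hx, hgx⟩ := exists_root
  have ha0 : (0:ℝ) < Real.exp (-2) := Real.exp_pos _
  have hx0 : 0 < x := lt_trans ha0 hx.1
  have hx1 : x < 1 := lt_trans hx.2 (by norm_num)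
  have key : ∀ y ∈ Set.Ioo (0:ℝ) 1, g y = 0 → y < 0.204 := by
    intro y hy hgy
    by_contra hcon
    push_neg at hcon
    rcases eq_or_lt_of_le hcon with heq | hlt
    · rw [← heq] at hgy; linarith [hg204]
    · have := g_pos_mid (by norm_num : (0:ℝ) < 0.204) hlt hy.2 hg204.le (le_of_eq hg1.symm)
      linarith
  constructor
  · refine ⟨x, ⟨⟨hx0, hx1⟩, hgx⟩, ?_⟩
    rintro y ⟨⟨hy0, hy1⟩, hgy⟩
    change g y = 0 at hgy
    by_contra hne
    rcases lt_trichotomy y x with h | h | h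
    · have := g_pos_mid hy0 h hx1 (le_of_eq hgy.symm) (le_of_eq hg1.symm)
      linarith
    · exact hne h
    · have := g_pos_mid hx0 h hy1 (le_of_eq hgx.symm) (le_of_eq hg1.symm)
      linarith
  · exact key
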